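/- Let k = s(q,n) and k̄ = s(q̄,n̄) be two distinct quasi-resonances, with γ̃*_q ≤ γ̃*_{q̄}. Set Z = (ε*_{k̄}/ε*_k)^{1/4} and W = (γ̃*_{q̄}/γ̃*_q)^{1/2} ≥ 1. Then the functions g*_k and g*_{k̄} are not identical, they coincide at no more than one point ε > 0, a coincidence point exists if and only if Z < 1/W or Z > W, and in that case it is unique, transverse (the derivatives of g*_k and g*_{k̄} differ there), and located at ε = ε*_k·(Z(WZ−1)/(Z−W))². -/

import Mathlib

open Real Filter Matrix

noncomputable section

/-- Orbit of the Gauss map `g(x) = {1/x}` starting at `Ω`: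
`x₀ = Ω`, `x_{j+1} = g(x_j)`. -/
def gaussOrbit (Ω : ℝ) : ℕ → ℝ
  | 0 => Ω
  | j + 1 => Int.fract (1 / gaussOrbit Ω j)

/-- `cfA Ω j` is the partial quotient `a_{j+1}` of the continued fraction of `Ω`. -/
def cfA (Ω : ℝ) (j : ℕ) : ℤ := ⌊1 / gaussOrbit Ω j⌋

/-- The matrix `[[a, 1], [1, 0]]`. -/
def Acf (a : ℤ) : Matrix (Fin 2) (Fin 2) ℤ := !![a, 1; 1, 0]

/-- The product `A₁ ⋯ A_m` with `A_i = [[a_i, 1], [1, 0]]`. -/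
def cfMatProd (Ω : ℝ) (m : ℕ) : Matrix (Fin 2) (Fin 2) ℤ :=
  ((List.range m).map fun i => Acf (cfA Ω i)).prod

/-- `cfQ Ω (j+1) = q_j`:  `q₋₁ = 0`, `q₀ = 1`, `q_j = a_j q_{j-1} + q_{j-2}`. -/
def cfQ (Ω : ℝ) : ℕ → ℤ
  | 0 => 0
  | 1 => 1
  | j + 2 => cfA Ω j * cfQ Ω (j + 1) + cfQ Ω j

/-- `cfP Ω (j+1) = p_j`:  `p₋₁ = 1`, `p₀ = 0`, `p_j = a_j p_{j-1} + p_{j-2}`. -/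
def cfP (Ω : ℝ) : ℕ → ℤ
  | 0 => 1
  | 1 => 0
  | j + 2 => cfA Ω j * cfP Ω (j + 1) + cfP Ω j

/-- The vector convergent `w(j) = (q_j, p_j)`. -/
def wconv (Ω : ℝ) (j : ℕ) : Fin 2 → ℤ := ![cfQ Ω (j + 1), cfP Ω (j + 1)]

/-- The resonant convergent `v(j) = (−p_j, q_j)`. -/
def vconv (Ω : ℝ) (j : ℕ) : Fin 2 → ℤ := ![-cfP Ω (j + 1), cfQ Ω (j + 1)]

/-- A quadratic irrational number. -/
def IsQuadraticIrrational (Ω : ℝ) : Prop :=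
  Irrational Ω ∧ ∃ A B C : ℤ, A ≠ 0 ∧ (A : ℝ) * Ω ^ 2 + (B : ℝ) * Ω + (C : ℝ) = 0

end
noncomputable section

/-- `⟨k, ω⟩ = k₁ + k₂ Ω` for `ω = (1, Ω)`. -/
def pairω (Ω : ℝ) (k : Fin 2 → ℤ) : ℝ := (k 0 : ℝ) + (k 1 : ℝ) * Ω

/-- `|k|₁ = |k₁| + |k₂|`. -/
def norm1 (k : Fin 2 → ℤ) : ℤ := |k 0| + |k 1|

/-- `p⁰(q)`: the integer nearest to `qΩ`. -/
def p0 (Ω : ℝ) (q : ℤ) : ℤ := round ((q : ℝ) * Ω)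

/-- `k⁰(q) = (−p⁰(q), q)`. -/
def kzero (Ω : ℝ) (q : ℤ) : Fin 2 → ℤ := ![-p0 Ω q, q]

/-- The set `A` of quasi-resonances: vectors `k⁰(q)`, `q ≥ 1`, with `|⟨k,ω⟩| < 1/2`. -/
def inA (Ω : ℝ) (k : Fin 2 → ℤ) : Prop :=
  ∃ q : ℤ, 1 ≤ q ∧ k = kzero Ω q ∧ |pairω Ω k| < 1 / 2

/-- A quasi-resonance `k` is primitive if `U⁻¹k` is not a quasi-resonance. -/
def PrimitiveVec (Ω : ℝ) (U : Matrix (Fin 2) (Fin 2) ℤ) (k : Fin 2 → ℤ) : Prop :=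
  inA Ω k ∧ ¬inA Ω (U⁻¹.mulVec k)

/-- A primitive integer `q ≥ 1`. -/
def PrimitiveInt (Ω : ℝ) (U : Matrix (Fin 2) (Fin 2) ℤ) (q : ℤ) : Prop :=
  1 ≤ q ∧ PrimitiveVec Ω U (kzero Ω q)

/-- The resonant sequence `s(q, n) = Uⁿ k⁰(q)`. -/
def sres (Ω : ℝ) (U : Matrix (Fin 2) (Fin 2) ℤ) (q : ℤ) (n : ℕ) : Fin 2 → ℤ :=
  (U ^ n).mulVec (kzero Ω q)

/-- `U = σ (T⁻¹)ᵀ` with `σ = det T = (−1)^m` and `T = A₁⋯A_m`. -/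
def Umat (Ω : ℝ) (m : ℕ) : Matrix (Fin 2) (Fin 2) ℤ :=
  ((-1 : ℤ) ^ m) • ((cfMatProd Ω m)⁻¹)ᵀ

/-- The numerator `γ_k = |⟨k,ω⟩| · |k|₁`. -/
def gammaK (Ω : ℝ) (k : Fin 2 → ℤ) : ℝ := |pairω Ω k| * (norm1 k : ℝ)

/-- `K_q = |z_q|(1+Ω)/|c+bΩ²|`, where `z_q = cq + bpΩ`, `p = p⁰(q)`,
and `b, c` are the off-diagonal entries of `T = A₁⋯A_m = [[a,b],[c,d]]`. -/
def KqD (Ω : ℝ) (m : ℕ) (q : ℤ) : ℝ :=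
  |(cfMatProd Ω m 1 0 : ℝ) * (q : ℝ) + (cfMatProd Ω m 0 1 : ℝ) * (p0 Ω q : ℝ) * Ω| * (1 + Ω) /
    |(cfMatProd Ω m 1 0 : ℝ) + (cfMatProd Ω m 0 1 : ℝ) * Ω ^ 2|

/-- The limit numerator `γ*_q = |r_q| K_q` with `r_q = qΩ − p⁰(q)`. -/
def gammaStarQ (Ω : ℝ) (m : ℕ) (q : ℤ) : ℝ :=
  |(q : ℝ) * Ω - (p0 Ω q : ℝ)| * KqD Ω m q

end
noncomputable section

/-- `G(ε; X, Y) = (√Y/2)((ε/X)^{1/4} + (X/ε)^{1/4})`. -/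
def Gfun (ε X Y : ℝ) : ℝ :=
  Real.sqrt Y / 2 * ((ε / X) ^ ((1 : ℝ) / 4) + (X / ε) ^ ((1 : ℝ) / 4))

/-- Normalized limit numerator `γ̃*_q = γ*_q / γ*` with `γ* = γ*_{q̂}`. -/
def tgam (Ω : ℝ) (m : ℕ) (qh q : ℤ) : ℝ := gammaStarQ Ω m q / gammaStarQ Ω m qh

/-- `D₀ = (π γ* / (2ρ))²`. -/
def D0 (Ω : ℝ) (m : ℕ) (ρ : ℝ) (qh : ℤ) : ℝ := (π * gammaStarQ Ω m qh / (2 * ρ)) ^ 2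

/-- `ε*_{s(q,n)} = D₀ (γ̃*_q)² / (K_q⁴ λ^{4n})`. -/
def epsStar (Ω : ℝ) (m : ℕ) (ρ lam : ℝ) (qh q : ℤ) (n : ℕ) : ℝ :=
  D0 Ω m ρ qh * tgam Ω m qh q ^ 2 / (KqD Ω m q ^ 4 * lam ^ (4 * n))

/-- `g*_{s(q,n)}(ε) = G(ε; ε*_{s(q,n)}, γ̃*_q)`. -/
def gstarF (Ω : ℝ) (m : ℕ) (ρ lam : ℝ) (qh q : ℤ) (n : ℕ) (ε : ℝ) : ℝ :=
  Gfun ε (epsStar Ω m ρ lam qh q n) (tgam Ω m qh q)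

/-- `h₁(ε)`: the infimum of `g*_k(ε)` over essential quasi-resonances `k = s(q,n)`. -/
def h1fun (Ω : ℝ) (m : ℕ) (ρ lam : ℝ) (qh : ℤ) (ε : ℝ) : ℝ :=
  sInf {y : ℝ | ∃ q : ℤ, ∃ n : ℕ, PrimitiveInt Ω (Umat Ω m) q ∧
    Int.gcd (kzero Ω q 0) (kzero Ω q 1) = 1 ∧ y = gstarF Ω m ρ lam qh q n ε}

end

set_option maxHeartbeats 1600000

noncomputable section LemmaFive

lemma gaussOrbit_props {Ω : ℝ} (hirr : Irrational Ω) (h0 : 0 < Ω) (h1 : Ω < 1) :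
    ∀ j, Irrational (gaussOrbit Ω j) ∧ 0 < gaussOrbit Ω j ∧ gaussOrbit Ω j < 1 := by
  intro j
  induction j with
  | zero => exact ⟨hirr, h0, h1⟩
  | succ j ih =>
    obtain ⟨hi, hp, _⟩ := ih
    have hinv : Irrational (1 / gaussOrbit Ω j) := by
      rw [one_div]; exact hi.inv
    have hfr : Irrational (gaussOrbit Ω (j+1)) := by
      show Irrational (Int.fract (1 / gaussOrbit Ω j))
      rw [Int.fract]; exact hinv.sub_intCast _
    refine ⟨hfr, ?_, ?_⟩
    · rcases lt_or_eq_of_le (Int.fract_nonneg (1 / gaussOrbit Ω j)) with h | h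
      · exact h
      · exfalso
        have : gaussOrbit Ω (j+1) = ((0:ℤ):ℝ) := by
          show Int.fract (1 / gaussOrbit Ω j) = _; rw [← h]; norm_num
        exact hfr.ne_int 0 this
    · exact Int.fract_lt_one _


lemma cfA_ge_one {Ω : ℝ} (hirr : Irrational Ω) (h0 : 0 < Ω) (h1 : Ω < 1) (j : ℕ) :
    1 ≤ cfA Ω j := by
  obtain ⟨_, hp, hl⟩ := gaussOrbit_props hirr h0 h1 j
  have : (1:ℝ) < 1 / gaussOrbit Ω j := by
    rw [lt_div_iff₀ hp]; linarith
  exact Int.le_floor.mpr (by exact_mod_cast this.le)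


lemma cfMatProd_succ (Ω : ℝ) (m : ℕ) :
    cfMatProd Ω (m+1) = cfMatProd Ω m * Acf (cfA Ω m) := by
  unfold cfMatProd
  rw [List.range_succ, List.map_append, List.prod_append]
  simp


lemma cfMatProd_entries {Ω : ℝ} (hirr : Irrational Ω) (h0 : 0 < Ω) (h1 : Ω < 1) :
    ∀ m : ℕ, 1 ≤ m →
      1 ≤ cfMatProd Ω m 0 0 ∧ 1 ≤ cfMatProd Ω m 0 1 ∧ 1 ≤ cfMatProd Ω m 1 0 ∧
        0 ≤ cfMatProd Ω m 1 1 := by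
  intro m hm
  induction m with
  | zero => omega
  | succ m ih =>
    rcases Nat.eq_or_lt_of_le hm with h | h
    · have : m = 0 := by omega
      subst this
      have := cfA_ge_one hirr h0 h1 0
      unfold cfMatProd
      simp [Acf, List.range_succ]
      omega
    · have hm1 : 1 ≤ m := by omega
      obtain ⟨e00, e01, e10, e11⟩ := ih hm1
      have ha := cfA_ge_one hirr h0 h1 m
      rw [cfMatProd_succ]
      simp only [Matrix.mul_apply, Fin.sum_univ_two, Acf,
        Matrix.cons_val', Matrix.cons_val_zero, Matrix.cons_val_one, Matrix.head_cons,
        Matrix.empty_val', Matrix.cons_val_fin_one, Matrix.head_fin_const,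
        Matrix.of_apply]
      refine ⟨?_, ?_, ?_, ?_⟩ <;> nlinarith


lemma cfMatProd_det (Ω : ℝ) (m : ℕ) : (cfMatProd Ω m).det = (-1)^m := by
  induction m with
  | zero => simp [cfMatProd]
  | succ m ih =>
    rw [cfMatProd_succ, Matrix.det_mul, ih, Acf, Matrix.det_fin_two_of, pow_succ]
    ring

lemma Umat_eq (Ω : ℝ) (m : ℕ) :
    Umat Ω m = !![cfMatProd Ω m 1 1, -(cfMatProd Ω m 1 0);
                  -(cfMatProd Ω m 0 1), cfMatProd Ω m 0 0] := by
  have hdet := cfMatProd_det Ω m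
  have hσ : ((-1:ℤ)^m) * ((-1:ℤ)^m) = 1 := by
    rw [← mul_pow]; norm_num
  have hinv : (cfMatProd Ω m)⁻¹ = ((-1:ℤ)^m) • (cfMatProd Ω m).adjugate := by
    apply Matrix.inv_eq_right_inv
    rw [Matrix.mul_smul, Matrix.mul_adjugate, hdet, smul_smul, hσ, one_smul]
  rw [Umat, hinv, Matrix.transpose_smul, smul_smul, hσ, one_smul,
    Matrix.adjugate_fin_two]
  ext i j
  fin_cases i <;> fin_cases j <;> simp


lemma p0_nonneg {Ω : ℝ} (h0 : 0 < Ω) {q : ℤ} (hq : 1 ≤ q) : 0 ≤ p0 Ω q := by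
  have : (0:ℝ) ≤ (q:ℝ) * Ω := by
    have : (1:ℝ) ≤ (q:ℝ) := by exact_mod_cast hq
    nlinarith
  rw [p0, round_eq]
  have : (0:ℝ) ≤ (q:ℝ) * Ω + 1/2 := by linarith
  exact Int.floor_nonneg.mpr this


lemma sres_succ (Ω : ℝ) (U : Matrix (Fin 2) (Fin 2) ℤ) (q : ℤ) (n : ℕ) :
    sres Ω U q (n+1) = U.mulVec (sres Ω U q n) := by
  unfold sres
  rw [pow_succ', Matrix.mulVec_mulVec]


lemma sres_signs {Ω : ℝ} (hirr : Irrational Ω) (h0 : 0 < Ω) (h1 : Ω < 1)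
    {m : ℕ} (hm : 1 ≤ m) {q : ℤ} (hq : 1 ≤ q) :
    ∀ n, (sres Ω (Umat Ω m) q n) 0 ≤ 0 ∧ 1 ≤ (sres Ω (Umat Ω m) q n) 1 := by
  obtain ⟨e00, e01, e10, e11⟩ := cfMatProd_entries hirr h0 h1 m hm
  have hp := p0_nonneg h0 hq
  intro n
  induction n with
  | zero =>
    unfold sres
    simp only [pow_zero, Matrix.one_mulVec, kzero]
    constructor
    · simpa using hp
    · simpa using hq
  | succ n ih =>
    obtain ⟨ih0, ih1⟩ := ih
    rw [sres_succ]
    set v := sres Ω (Umat Ω m) q n with hv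
    have h0' : ((Umat Ω m).mulVec v) 0
        = cfMatProd Ω m 1 1 * v 0 + (-(cfMatProd Ω m 1 0)) * v 1 := by
      rw [Umat_eq]
      simp [Matrix.mulVec, dotProduct, Fin.sum_univ_two]
    have h1' : ((Umat Ω m).mulVec v) 1
        = -(cfMatProd Ω m 0 1) * v 0 + cfMatProd Ω m 0 0 * v 1 := by
      rw [Umat_eq]
      simp [Matrix.mulVec, dotProduct, Fin.sum_univ_two]
    rw [h0', h1']
    constructor
    · nlinarith
    · nlinarith


lemma pair_Umat {Ω lam : ℝ} {m : ℕ} (hlam : 1 < lam)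
    (heig : ((cfMatProd Ω m).map fun z : ℤ => (z : ℝ)).mulVec ![1, Ω] = lam • ![1, Ω])
    (v : Fin 2 → ℤ) :
    pairω Ω ((Umat Ω m).mulVec v) = ((-1:ℝ)^m / lam) * pairω Ω v := by
  have hlam0 : lam ≠ 0 := by linarith
  have ha : (cfMatProd Ω m 0 0 : ℝ) + (cfMatProd Ω m 0 1 : ℝ) * Ω = lam := by
    have h := congrFun heig 0
    simpa [Matrix.mulVec, dotProduct, Fin.sum_univ_two] using h
  have hc : (cfMatProd Ω m 1 0 : ℝ) + (cfMatProd Ω m 1 1 : ℝ) * Ω = lam * Ω := by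
    have h := congrFun heig 1
    simpa [Matrix.mulVec, dotProduct, Fin.sum_univ_two] using h
  have hdet : (cfMatProd Ω m 0 0 : ℝ) * (cfMatProd Ω m 1 1 : ℝ)
      - (cfMatProd Ω m 0 1 : ℝ) * (cfMatProd Ω m 1 0 : ℝ) = (-1:ℝ)^m := by
    have h := cfMatProd_det Ω m
    rw [Matrix.det_fin_two] at h
    exact_mod_cast congrArg (fun z : ℤ => (z:ℝ)) h
  have h0z : ((Umat Ω m).mulVec v) 0 = cfMatProd Ω m 1 1 * v 0 - cfMatProd Ω m 1 0 * v 1 := by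
    rw [Umat_eq]
    simp [Matrix.mulVec, dotProduct, Fin.sum_univ_two]
    try ring
  have h1z : ((Umat Ω m).mulVec v) 1 = -(cfMatProd Ω m 0 1) * v 0 + cfMatProd Ω m 0 0 * v 1 := by
    rw [Umat_eq]
    simp [Matrix.mulVec, dotProduct, Fin.sum_univ_two]
    try ring
  unfold pairω
  rw [h0z, h1z, div_mul_eq_mul_div, eq_div_iff hlam0]
  push_cast
  linear_combination ((v 0 : ℝ) + (v 1 : ℝ) * Ω) * hdet
    - ((v 0 : ℝ) * (cfMatProd Ω m 1 1 : ℝ) - (v 1 : ℝ) * (cfMatProd Ω m 1 0 : ℝ)) * ha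
    - (-(v 0 : ℝ) * (cfMatProd Ω m 0 1 : ℝ) + (v 1 : ℝ) * (cfMatProd Ω m 0 0 : ℝ)) * hc


lemma pair_sres {Ω lam : ℝ} {m : ℕ} (hlam : 1 < lam)
    (heig : ((cfMatProd Ω m).map fun z : ℤ => (z : ℝ)).mulVec ![1, Ω] = lam • ![1, Ω])
    (q : ℤ) (n : ℕ) :
    pairω Ω (sres Ω (Umat Ω m) q n)
      = ((-1:ℝ)^m / lam)^n * ((q:ℝ) * Ω - (p0 Ω q : ℝ)) := by
  induction n with
  | zero =>
    unfold sres pairω kzero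
    simp
    ring
  | succ n ih =>
    rw [sres_succ, pair_Umat hlam heig, ih, pow_succ]
    ring


lemma abs_pair_sres {Ω lam : ℝ} {m : ℕ} (hlam : 1 < lam)
    (heig : ((cfMatProd Ω m).map fun z : ℤ => (z : ℝ)).mulVec ![1, Ω] = lam • ![1, Ω])
    (q : ℤ) (n : ℕ) :
    |pairω Ω (sres Ω (Umat Ω m) q n)| * lam ^ n
      = |(q:ℝ) * Ω - (p0 Ω q : ℝ)| := by
  have hlp : (0:ℝ) < lam := by linarith
  rw [pair_sres hlam heig, abs_mul, abs_pow, abs_div, abs_pow, abs_neg, abs_one,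
    one_pow, abs_of_pos hlp, div_pow, one_pow]
  field_simp


lemma KqD_pos {Ω : ℝ} (hirr : Irrational Ω) (h0 : 0 < Ω) (h1 : Ω < 1)
    {m : ℕ} (hm : 1 ≤ m) {q : ℤ} (hq : 1 ≤ q) : 0 < KqD Ω m q := by
  obtain ⟨e00, e01, e10, e11⟩ := cfMatProd_entries hirr h0 h1 m hm
  have hp := p0_nonneg h0 hq
  have hq' : (1:ℝ) ≤ (q:ℝ) := by exact_mod_cast hq
  have hc' : (1:ℝ) ≤ (cfMatProd Ω m 1 0 : ℝ) := by exact_mod_cast e10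
  have hb' : (1:ℝ) ≤ (cfMatProd Ω m 0 1 : ℝ) := by exact_mod_cast e01
  have hp' : (0:ℝ) ≤ (p0 Ω q : ℝ) := by exact_mod_cast hp
  have hnum : (0:ℝ) < (cfMatProd Ω m 1 0 : ℝ) * (q : ℝ)
      + (cfMatProd Ω m 0 1 : ℝ) * (p0 Ω q : ℝ) * Ω := by
    have t1 : (1:ℝ) ≤ (cfMatProd Ω m 1 0 : ℝ) * (q:ℝ) := by nlinarith
    have t2 : (0:ℝ) ≤ (cfMatProd Ω m 0 1 : ℝ) * (p0 Ω q : ℝ) * Ω :=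
      mul_nonneg (mul_nonneg (by linarith) hp') h0.le
    linarith
  have hden : (0:ℝ) < (cfMatProd Ω m 1 0 : ℝ) + (cfMatProd Ω m 0 1 : ℝ) * Ω ^ 2 := by
    have t2 : (0:ℝ) ≤ (cfMatProd Ω m 0 1 : ℝ) * Ω ^ 2 :=
      mul_nonneg (by linarith) (sq_nonneg Ω)
    linarith
  unfold KqD
  rw [abs_of_pos hnum, abs_of_pos hden]
  positivity


lemma gammaStarQ_pos {Ω : ℝ} (hirr : Irrational Ω) (h0 : 0 < Ω) (h1 : Ω < 1)
    {m : ℕ} (hm : 1 ≤ m) {q : ℤ} (hq : 1 ≤ q) : 0 < gammaStarQ Ω m q := by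
  have hKq := KqD_pos hirr h0 h1 hm hq
  have hirrq : Irrational ((q:ℝ) * Ω) := hirr.intCast_mul (by omega)
  have : (q:ℝ) * Ω - (p0 Ω q : ℝ) ≠ 0 := sub_ne_zero.mpr (hirrq.ne_int _)
  unfold gammaStarQ
  exact mul_pos (abs_pos.mpr this) hKq

lemma quarter_pow {a : ℝ} (ha : 0 ≤ a) : (a ^ (4:ℕ)) ^ ((1:ℝ)/4) = a := by
  rw [← Real.rpow_natCast a 4, ← Real.rpow_mul ha]
  norm_num


lemma pow_quarter {ε : ℝ} (hε : 0 ≤ ε) : (ε ^ ((1:ℝ)/4)) ^ (4:ℕ) = ε := by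
  rw [← Real.rpow_natCast (ε ^ ((1:ℝ)/4)) 4, ← Real.rpow_mul hε]
  norm_num


lemma Gfun_eq {X Y ε : ℝ} (hX : 0 < X) (hε : 0 < ε) :
    Gfun ε X Y = Real.sqrt Y / 2 *
      (ε ^ ((1:ℝ)/4) / X ^ ((1:ℝ)/4) + X ^ ((1:ℝ)/4) / ε ^ ((1:ℝ)/4)) := by
  unfold Gfun
  rw [Real.div_rpow hε.le hX.le, Real.div_rpow hX.le hε.le]


lemma Gfun_deriv {X Y : ℝ} (hX : 0 < X) (hY : 0 < Y) {ε : ℝ} (hε : 0 < ε) :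
    deriv (fun e => Gfun e X Y) ε
      = Real.sqrt Y / (8 * ε) * (ε ^ ((1:ℝ)/4) / X ^ ((1:ℝ)/4)
          - X ^ ((1:ℝ)/4) / ε ^ ((1:ℝ)/4)) := by
  have hx : 0 < X ^ ((1:ℝ)/4) := Real.rpow_pos_of_pos hX _
  have ht : 0 < ε ^ ((1:ℝ)/4) := Real.rpow_pos_of_pos hε _
  have h1 : HasDerivAt (fun e : ℝ => e ^ ((1:ℝ)/4)) ((1:ℝ)/4 * ε ^ ((1:ℝ)/4 - 1)) ε :=
    Real.hasDerivAt_rpow_const (Or.inl hε.ne')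
  have h2 : HasDerivAt (fun e : ℝ => e ^ (-((1:ℝ)/4))) (-((1:ℝ)/4) * ε ^ (-((1:ℝ)/4) - 1)) ε :=
    Real.hasDerivAt_rpow_const (Or.inl hε.ne')
  have hφ : HasDerivAt (fun e : ℝ => Real.sqrt Y / 2 *
      ((X ^ ((1:ℝ)/4))⁻¹ * e ^ ((1:ℝ)/4) + X ^ ((1:ℝ)/4) * e ^ (-((1:ℝ)/4))))
      (Real.sqrt Y / 2 * ((X ^ ((1:ℝ)/4))⁻¹ * ((1:ℝ)/4 * ε ^ ((1:ℝ)/4 - 1))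
        + X ^ ((1:ℝ)/4) * (-((1:ℝ)/4) * ε ^ (-((1:ℝ)/4) - 1)))) ε :=
    ((h1.const_mul _).add (h2.const_mul _)).const_mul _
  have hev : (fun e => Gfun e X Y) =ᶠ[nhds ε] (fun e : ℝ => Real.sqrt Y / 2 *
      ((X ^ ((1:ℝ)/4))⁻¹ * e ^ ((1:ℝ)/4) + X ^ ((1:ℝ)/4) * e ^ (-((1:ℝ)/4)))) := by
    filter_upwards [lt_mem_nhds hε] with e he
    rw [Gfun_eq hX he, Real.rpow_neg he.le]
    ring
  have hD := (hφ.congr_of_eventuallyEq hev).deriv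
  rw [hD, Real.rpow_sub hε, Real.rpow_sub hε, Real.rpow_one, Real.rpow_neg hε.le]
  field_simp
  ring


lemma Gfun_main (X Y Xb Yb Z W : ℝ) (hX : 0 < X) (hY : 0 < Y) (hXb : 0 < Xb)
    (hYb : 0 < Yb) (hYle : Y ≤ Yb) (hnXY : ¬(X = Xb ∧ Y = Yb))
    (hZ : Z = (Xb / X) ^ ((1:ℝ)/4)) (hW : W = Real.sqrt (Yb / Y)) :
    (¬ ∀ ε : ℝ, 0 < ε → Gfun ε X Y = Gfun ε Xb Yb) ∧
    (∀ ε₁ ε₂ : ℝ, 0 < ε₁ → 0 < ε₂ → Gfun ε₁ X Y = Gfun ε₁ Xb Yb →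
        Gfun ε₂ X Y = Gfun ε₂ Xb Yb → ε₁ = ε₂) ∧
    ((∃ ε : ℝ, 0 < ε ∧ Gfun ε X Y = Gfun ε Xb Yb) ↔ (Z < 1 / W ∨ W < Z)) ∧
    (∀ ε : ℝ, 0 < ε → Gfun ε X Y = Gfun ε Xb Yb →
      ε = X * (Z * (W * Z - 1) / (Z - W)) ^ 2 ∧
      deriv (fun e => Gfun e X Y) ε ≠ deriv (fun e => Gfun e Xb Yb) ε) := by
  set x := X ^ ((1:ℝ)/4) with hxdef
  set s := Real.sqrt Y with hsdef
  have hx : 0 < x := Real.rpow_pos_of_pos hX _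
  have hs : 0 < s := Real.sqrt_pos.mpr hY
  have hZ0 : 0 < Z := hZ ▸ Real.rpow_pos_of_pos (div_pos hXb hX) _
  have hW1 : 1 ≤ W := hW ▸ (Real.one_le_sqrt.mpr ((one_le_div hY).mpr hYle))
  have hW0 : 0 < W := lt_of_lt_of_le zero_lt_one hW1
  have hxb : Xb ^ ((1:ℝ)/4) = x * Z := by
    rw [hZ, hxdef, ← Real.mul_rpow hX.le (div_pos hXb hX).le,
      mul_div_cancel₀ _ hX.ne']
  have hsb : Real.sqrt Yb = s * W := by
    rw [hW, hsdef, ← Real.sqrt_mul hY.le, mul_div_cancel₀ _ hY.ne']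
  have hZW : ¬(Z = 1 ∧ W = 1) := by
    rintro ⟨hz1, hw1⟩
    apply hnXY
    constructor
    · have : Xb / X = ((Xb / X) ^ ((1:ℝ)/4)) ^ (4:ℕ) :=
        (pow_quarter (div_pos hXb hX).le).symm
      rw [← hZ, hz1] at this
      simp at this
      field_simp at this
      linarith
    · have : Yb / Y = Real.sqrt (Yb / Y) ^ 2 :=
        (Real.sq_sqrt (div_pos hYb hY).le).symm
      rw [← hW, hw1] at this
      simp at this
      field_simp at this
      linarith
  -- coincidence equation
  have hiff : ∀ ε : ℝ, 0 < ε → (Gfun ε X Y = Gfun ε Xb Yb ↔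
      (ε ^ ((1:ℝ)/4)) ^ 2 * (Z - W) = x ^ 2 * Z * (W * Z - 1)) := by
    intro ε hε
    have ht : 0 < ε ^ ((1:ℝ)/4) := Real.rpow_pos_of_pos hε _
    set t := ε ^ ((1:ℝ)/4)
    rw [Gfun_eq hX hε, Gfun_eq hXb hε, hxb, hsb]
    have key : s / 2 * (t / x + x / t) - s * W / 2 * (t / (x * Z) + x * Z / t)
        = s / (2 * t * x * Z) * (t ^ 2 * (Z - W) - x ^ 2 * Z * (W * Z - 1)) := by
      field_simp
      ring
    constructor
    · intro h
      have h0 : s / (2 * t * x * Z) * (t ^ 2 * (Z - W) - x ^ 2 * Z * (W * Z - 1)) = 0 := by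
        rw [← key]; linarith
      rcases mul_eq_zero.mp h0 with h' | h'
      · exfalso
        have hpos : 0 < s / (2 * t * x * Z) := by positivity
        rw [h'] at hpos; exact lt_irrefl 0 hpos
      · linarith
    · intro h
      have h0 : s / 2 * (t / x + x / t) - s * W / 2 * (t / (x * Z) + x * Z / t) = 0 := by
        rw [key, h]; ring
      linarith
  -- Z ≠ W whenever a coincidence exists
  have hZneW : ∀ ε : ℝ, 0 < ε → Gfun ε X Y = Gfun ε Xb Yb → Z ≠ W := by
    intro ε hε h hzw
    have ht : 0 < ε ^ ((1:ℝ)/4) := Real.rpow_pos_of_pos hε _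
    have h' := (hiff ε hε).mp h
    rw [hzw] at h'
    have h0 : x ^ 2 * W * (W * W - 1) = 0 := by rw [← h']; ring
    have hW2 : (W - 1) * (W + 1) = 0 := by
      rcases mul_eq_zero.mp h0 with h0' | h0'
      · exact absurd h0' (by positivity : (0:ℝ) < x ^ 2 * W).ne'
      · linarith [h0']
    have hW1' : W = 1 := by
      rcases mul_eq_zero.mp hW2 with h2 | h2
      · linarith
      · linarith
    exact hZW ⟨by rw [hzw, hW1'], hW1'⟩
  -- helper: value of a coincidence point
  have hloc : ∀ ε : ℝ, 0 < ε → Gfun ε X Y = Gfun ε Xb Yb →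
      ε = X * (Z * (W * Z - 1) / (Z - W)) ^ 2 := by
    intro ε hε h
    have hzw := hZneW ε hε h
    have ht : 0 < ε ^ ((1:ℝ)/4) := Real.rpow_pos_of_pos hε _
    have h' := (hiff ε hε).mp h
    have ht2 : (ε ^ ((1:ℝ)/4)) ^ 2 = x ^ 2 * (Z * (W * Z - 1) / (Z - W)) := by
      rw [mul_div_assoc'] at *
      rw [eq_div_iff (sub_ne_zero.mpr hzw)]
      linear_combination h'
    have : ε = ((ε ^ ((1:ℝ)/4)) ^ (2:ℕ)) ^ (2:ℕ) := by
      rw [← pow_mul, pow_quarter hε.le]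
    rw [this, ht2, mul_pow, ← pow_mul, hxdef, ← Real.rpow_natCast (X ^ ((1:ℝ)/4)) 4,
      ← Real.rpow_mul hX.le]
    norm_num
  have huniq : ∀ ε₁ ε₂ : ℝ, 0 < ε₁ → 0 < ε₂ → Gfun ε₁ X Y = Gfun ε₁ Xb Yb →
      Gfun ε₂ X Y = Gfun ε₂ Xb Yb → ε₁ = ε₂ := by
    intro ε₁ ε₂ h₁ h₂ hc₁ hc₂
    rw [hloc ε₁ h₁ hc₁, hloc ε₂ h₂ hc₂]
  refine ⟨?_, huniq, ?_, ?_⟩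
  · intro hall
    have := huniq 1 2 one_pos two_pos (hall 1 one_pos) (hall 2 two_pos)
    norm_num at this
  · constructor
    · rintro ⟨ε, hε, h⟩
      have hzw := hZneW ε hε h
      have ht : 0 < ε ^ ((1:ℝ)/4) := Real.rpow_pos_of_pos hε _
      have h' := (hiff ε hε).mp h
      rcases lt_or_gt_of_ne hzw with hlt | hgt
      · left
        have hneg : (ε ^ ((1:ℝ)/4)) ^ 2 * (Z - W) < 0 := by
          have := mul_pos (pow_pos ht 2) (sub_pos.mpr hlt)
          nlinarith
        have hrhs : x ^ 2 * Z * (W * Z - 1) < 0 := by rw [← h']; exact hneg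
        have hwz : W * Z - 1 < 0 := by
          by_contra hge
          push_neg at hge
          have := mul_nonneg (le_of_lt (mul_pos (pow_pos hx 2) hZ0)) hge
          linarith
        rw [lt_div_iff₀ hW0]
        have := mul_comm Z W
        linarith
      · right; exact hgt
    · intro hcase
      have hR : 0 < Z * (W * Z - 1) / (Z - W) := by
        rcases hcase with h | h
        · have h1 : W * Z < 1 := by
            rw [lt_div_iff₀ hW0] at h
            nlinarith
          have h2 : Z < W := by nlinarith
          have : Z * (W * Z - 1) < 0 := by nlinarith
          exact div_pos_of_neg_of_neg this (by linarith)
        · have h1 : 1 < W * Z := by nlinarith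
          apply div_pos (by nlinarith) (by linarith)
      have hzw : Z ≠ W := by
        intro hzw
        rw [hzw, sub_self, div_zero] at hR
        exact lt_irrefl 0 hR
      set R := Z * (W * Z - 1) / (Z - W) with hRdef
      refine ⟨X * R ^ 2, by positivity, ?_⟩
      have hεpos : 0 < X * R ^ 2 := by positivity
      rw [hiff _ hεpos]
      have hxR : 0 ≤ x * Real.sqrt R := by positivity
      have ht : (X * R ^ 2) ^ ((1:ℝ)/4) = x * Real.sqrt R := by
        have : X * R ^ 2 = (x * Real.sqrt R) ^ (4:ℕ) := by
          rw [mul_pow]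
          congr 1
          · rw [hxdef, ← Real.rpow_natCast (X ^ ((1:ℝ)/4)) 4, ← Real.rpow_mul hX.le]
            norm_num
          · rw [show (4:ℕ) = 2 * 2 by norm_num, pow_mul, Real.sq_sqrt hR.le]
        rw [this, quarter_pow hxR]
      rw [ht, mul_pow, Real.sq_sqrt hR.le, hRdef]
      field_simp [sub_ne_zero.mpr hzw]
  · intro ε hε h
    refine ⟨hloc ε hε h, ?_⟩
    have hzw := hZneW ε hε h
    have ht : 0 < ε ^ ((1:ℝ)/4) := Real.rpow_pos_of_pos hε _
    have h' := (hiff ε hε).mp h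
    have hR0 : x ^ 2 * Z * (W * Z - 1) ≠ 0 := by
      intro h0
      have : W * Z - 1 = 0 := by
        rcases mul_eq_zero.mp h0 with h0' | h0'
        · exfalso
          rcases mul_eq_zero.mp h0' with h0'' | h0''
          · exact (by positivity : (0:ℝ) < x ^ 2).ne' h0''
          · exact hZ0.ne' h0''
        · exact h0'
      have hzw2 : Z = W := by
        have hE : (ε ^ ((1:ℝ)/4)) ^ 2 * (Z - W) = 0 := by rw [h', h0]
        rcases mul_eq_zero.mp hE with h2 | h2
        · exact absurd h2 (by positivity : (0:ℝ) < (ε ^ ((1:ℝ)/4)) ^ 2).ne'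
        · linarith
      exact hzw hzw2
    rw [Gfun_deriv hX hY hε, Gfun_deriv hXb hYb hε, hxb, hsb]
    set t := ε ^ ((1:ℝ)/4)
    intro hd
    have key2 : s / (8 * ε) * (t / x - x / t) - s * W / (8 * ε) * (t / (x * Z) - x * Z / t)
        = s / (8 * ε * t * x * Z) * (t ^ 2 * (Z - W) + x ^ 2 * Z * (W * Z - 1)) := by
      field_simp
      ring
    have hsum : t ^ 2 * (Z - W) + x ^ 2 * Z * (W * Z - 1) = 0 := by
      have h0 : s / (8 * ε * t * x * Z) * (t ^ 2 * (Z - W) + x ^ 2 * Z * (W * Z - 1)) = 0 := by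
        rw [← key2]; linarith
      rcases mul_eq_zero.mp h0 with h0' | h0'
      · exact absurd h0' (by positivity : (0:ℝ) < s / (8 * ε * t * x * Z)).ne'
      · exact h0'
    rw [h'] at hsum
    have : x ^ 2 * Z * (W * Z - 1) = 0 := by linarith
    exact hR0 this

lemma int_comb_zero {Ω : ℝ} (hirr : Irrational Ω) {A B : ℤ}
    (h : (A:ℝ) + (B:ℝ) * Ω = 0) : A = 0 ∧ B = 0 := by
  by_cases hB : B = 0
  · subst hB
    simp at h
    exact ⟨by exact_mod_cast h, rfl⟩
  · exfalso
    have hB' : (B:ℝ) ≠ 0 := Int.cast_ne_zero.mpr hB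
    have hΩ : Ω = ((((-A : ℚ)) / ((B : ℚ)) : ℚ) : ℝ) := by
      push_cast
      rw [eq_div_iff hB']
      linear_combination h
    exact Rat.not_irrational _ (hΩ ▸ hirr)

lemma pow4_inj {a b : ℝ} (ha : 0 < a) (hb : 0 < b) (h : a ^ (4:ℕ) = b ^ (4:ℕ)) : a = b := by
  by_contra hne
  rcases lt_or_gt_of_ne hne with hlt | hgt
  · have := pow_lt_pow_left₀ hlt ha.le (by norm_num : (4:ℕ) ≠ 0)
    rw [h] at this; exact lt_irrefl _ this
  · have := pow_lt_pow_left₀ hgt hb.le (by norm_num : (4:ℕ) ≠ 0)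
    rw [h] at this; exact lt_irrefl _ this

end LemmaFive

/-- Lemma 5 (lm:ZW): for two distinct quasi-resonances `k = s(q,n)`, `k̄ = s(q̄,n̄)` with
`γ̃*_q ≤ γ̃*_{q̄}`, setting `Z = (ε*_{k̄}/ε*_k)^{1/4}` and `W = (γ̃*_{q̄}/γ̃*_q)^{1/2}`,
the graphs of `g*_k` and `g*_{k̄}` are not identical, they coincide at no more than one
point `ε > 0`, a coincidence point exists iff `Z < 1/W` or `Z > W`, and in that case it
is unique, transverse, and located at `ε = ε*_k (Z(WZ−1)/(Z−W))²`. -/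
theorem splitting_quadratic_stmt12
    (Ω : ℝ) (m : ℕ) (hm : 1 ≤ m) (h0 : 0 < Ω) (h1 : Ω < 1)
    (hquad : IsQuadraticIrrational Ω)
    (hper : gaussOrbit Ω m = Ω)
    (lam : ℝ) (hlam : 1 < lam)
    (heig : ((cfMatProd Ω m).map fun z : ℤ => (z : ℝ)).mulVec ![1, Ω] = lam • ![1, Ω])
    (ρ : ℝ) (hρ : 0 < ρ)
    (qh : ℤ) (hqh : PrimitiveInt Ω (Umat Ω m) qh)
    (hmin : ∀ q' : ℤ, PrimitiveInt Ω (Umat Ω m) q' →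
      gammaStarQ Ω m qh ≤ gammaStarQ Ω m q')
    (q qb : ℤ) (n nb : ℕ)
    (hq : PrimitiveInt Ω (Umat Ω m) q) (hqb : PrimitiveInt Ω (Umat Ω m) qb)
    (hne : sres Ω (Umat Ω m) q n ≠ sres Ω (Umat Ω m) qb nb)
    (hWle : tgam Ω m qh q ≤ tgam Ω m qh qb)
    (Z W : ℝ)
    (hZ : Z = (epsStar Ω m ρ lam qh qb nb / epsStar Ω m ρ lam qh q n) ^ ((1 : ℝ) / 4))
    (hW : W = Real.sqrt (tgam Ω m qh qb / tgam Ω m qh q)) :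
    (¬∀ ε : ℝ, 0 < ε →
        gstarF Ω m ρ lam qh q n ε = gstarF Ω m ρ lam qh qb nb ε) ∧
    (∀ ε₁ ε₂ : ℝ, 0 < ε₁ → 0 < ε₂ →
        gstarF Ω m ρ lam qh q n ε₁ = gstarF Ω m ρ lam qh qb nb ε₁ →
        gstarF Ω m ρ lam qh q n ε₂ = gstarF Ω m ρ lam qh qb nb ε₂ → ε₁ = ε₂) ∧
    ((∃ ε : ℝ, 0 < ε ∧
        gstarF Ω m ρ lam qh q n ε = gstarF Ω m ρ lam qh qb nb ε) ↔
      (Z < 1 / W ∨ W < Z)) ∧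
    (∀ ε : ℝ, 0 < ε →
        gstarF Ω m ρ lam qh q n ε = gstarF Ω m ρ lam qh qb nb ε →
      ε = epsStar Ω m ρ lam qh q n * (Z * (W * Z - 1) / (Z - W)) ^ 2 ∧
      deriv (gstarF Ω m ρ lam qh q n) ε ≠ deriv (gstarF Ω m ρ lam qh qb nb) ε) := by
  have hirr : Irrational Ω := hquad.1
  have hlam0 : (0:ℝ) < lam := by linarith
  have hγ : 0 < gammaStarQ Ω m qh := gammaStarQ_pos hirr h0 h1 hm hqh.1
  have hKq : 0 < KqD Ω m q := KqD_pos hirr h0 h1 hm hq.1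
  have hKqb : 0 < KqD Ω m qb := KqD_pos hirr h0 h1 hm hqb.1
  have hγq : 0 < gammaStarQ Ω m q := gammaStarQ_pos hirr h0 h1 hm hq.1
  have hγqb : 0 < gammaStarQ Ω m qb := gammaStarQ_pos hirr h0 h1 hm hqb.1
  have hY : 0 < tgam Ω m qh q := div_pos hγq hγ
  have hYb : 0 < tgam Ω m qh qb := div_pos hγqb hγ
  have hD0 : 0 < D0 Ω m ρ qh := by
    have : 0 < π * gammaStarQ Ω m qh / (2 * ρ) :=
      div_pos (mul_pos Real.pi_pos hγ) (by linarith)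
    exact pow_pos this 2
  have hX : 0 < epsStar Ω m ρ lam qh q n :=
    div_pos (mul_pos hD0 (pow_pos hY 2))
      (mul_pos (pow_pos hKq 4) (pow_pos hlam0 _))
  have hXb : 0 < epsStar Ω m ρ lam qh qb nb :=
    div_pos (mul_pos hD0 (pow_pos hYb 2))
      (mul_pos (pow_pos hKqb 4) (pow_pos hlam0 _))
  -- the two quasi-resonances cannot share both parameters
  have hnXY : ¬(epsStar Ω m ρ lam qh q n = epsStar Ω m ρ lam qh qb nb ∧
      tgam Ω m qh q = tgam Ω m qh qb) := by
    rintro ⟨hXe, hYe⟩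
    have hγeq : gammaStarQ Ω m q = gammaStarQ Ω m qb := by
      have := hYe
      unfold tgam at this
      field_simp [hγ.ne'] at this
      exact this
    -- equal denominators
    have hden : KqD Ω m q ^ 4 * lam ^ (4 * n) = KqD Ω m qb ^ 4 * lam ^ (4 * nb) := by
      have hXe' := hXe
      unfold epsStar at hXe'
      rw [hYe] at hXe'
      have hNum : 0 < D0 Ω m ρ qh * tgam Ω m qh qb ^ 2 :=
        mul_pos hD0 (pow_pos hYb 2)
      have hd1 : (0:ℝ) < KqD Ω m q ^ 4 * lam ^ (4 * n) :=
        mul_pos (pow_pos hKq 4) (pow_pos hlam0 _)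
      have hd2 : (0:ℝ) < KqD Ω m qb ^ 4 * lam ^ (4 * nb) :=
        mul_pos (pow_pos hKqb 4) (pow_pos hlam0 _)
      rw [div_eq_div_iff hd1.ne' hd2.ne'] at hXe'
      exact mul_left_cancel₀ hNum.ne' (by linarith [hXe'])
    have hKL : KqD Ω m q * lam ^ n = KqD Ω m qb * lam ^ nb := by
      apply pow4_inj (mul_pos hKq (pow_pos hlam0 n)) (mul_pos hKqb (pow_pos hlam0 nb))
      rw [mul_pow, mul_pow, ← pow_mul, ← pow_mul, mul_comm n 4, mul_comm nb 4]
      exact hden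
    have hKLpos : 0 < KqD Ω m q * lam ^ n := mul_pos hKq (pow_pos hlam0 n)
    set r := |(q : ℝ) * Ω - (p0 Ω q : ℝ)| with hrdef
    set rb := |(qb : ℝ) * Ω - (p0 Ω qb : ℝ)| with hrbdef
    have hγeq' : r * KqD Ω m q = rb * KqD Ω m qb := hγeq
    have hrr : r * lam ^ nb = rb * lam ^ n := by
      apply mul_right_cancel₀ hKLpos.ne'
      calc r * lam ^ nb * (KqD Ω m q * lam ^ n)
          = (r * KqD Ω m q) * (lam ^ n * lam ^ nb) := by ring
        _ = (rb * KqD Ω m qb) * (lam ^ n * lam ^ nb) := by rw [hγeq']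
        _ = (rb * lam ^ n) * (KqD Ω m qb * lam ^ nb) := by ring
        _ = (rb * lam ^ n) * (KqD Ω m q * lam ^ n) := by rw [hKL]
    have habs : |pairω Ω (sres Ω (Umat Ω m) q n)|
        = |pairω Ω (sres Ω (Umat Ω m) qb nb)| := by
      have h1 := abs_pair_sres hlam heig q n
      have h2 := abs_pair_sres hlam heig qb nb
      have hcancel : (0:ℝ) < lam ^ n * lam ^ nb := by positivity
      apply mul_right_cancel₀ hcancel.ne'
      calc |pairω Ω (sres Ω (Umat Ω m) q n)| * (lam ^ n * lam ^ nb)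
          = (|pairω Ω (sres Ω (Umat Ω m) q n)| * lam ^ n) * lam ^ nb := by ring
        _ = r * lam ^ nb := by rw [h1]
        _ = rb * lam ^ n := hrr
        _ = (|pairω Ω (sres Ω (Umat Ω m) qb nb)| * lam ^ nb) * lam ^ n := by rw [h2]
        _ = |pairω Ω (sres Ω (Umat Ω m) qb nb)| * (lam ^ n * lam ^ nb) := by ring
    obtain ⟨hk0, hk1⟩ := sres_signs hirr h0 h1 hm hq.1 n
    obtain ⟨hkb0, hkb1⟩ := sres_signs hirr h0 h1 hm hqb.1 nb
    set k := sres Ω (Umat Ω m) q n with hkdef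
    set kb := sres Ω (Umat Ω m) qb nb with hkbdef
    rcases abs_eq_abs.mp habs with hcase | hcase
    · -- k = kb, contradiction with hne
      have hz : ((k 0 - kb 0 : ℤ) : ℝ) + ((k 1 - kb 1 : ℤ) : ℝ) * Ω = 0 := by
        unfold pairω at hcase
        push_cast
        linarith [hcase]
      obtain ⟨hA, hB⟩ := int_comb_zero hirr hz
      apply hne
      funext i
      fin_cases i
      · show k 0 = kb 0; omega
      · show k 1 = kb 1; omega
    · -- k = -kb, impossible by signs
      have hz : ((k 0 + kb 0 : ℤ) : ℝ) + ((k 1 + kb 1 : ℤ) : ℝ) * Ω = 0 := by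
        unfold pairω at hcase
        push_cast
        linarith [hcase]
      obtain ⟨hA, hB⟩ := int_comb_zero hirr hz
      omega
  have hmain := Gfun_main (epsStar Ω m ρ lam qh q n) (tgam Ω m qh q)
    (epsStar Ω m ρ lam qh qb nb) (tgam Ω m qh qb) Z W hX hY hXb hYb hWle hnXY hZ hW
  obtain ⟨m1, m2, m3, m4⟩ := hmain
  have hfun : gstarF Ω m ρ lam qh q n
      = fun e => Gfun e (epsStar Ω m ρ lam qh q n) (tgam Ω m qh q) := rfl
  have hfunb : gstarF Ω m ρ lam qh qb nb
      = fun e => Gfun e (epsStar Ω m ρ lam qh qb nb) (tgam Ω m qh qb) := rfl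
  rw [hfun, hfunb]
  exact ⟨m1, m2, m3, m4⟩
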